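/- Let n be a positive integer, let P, Q, R, S, E₀ be n×n real matrices, set M = Sᵀ·E₀ − Qᵀ and N = Pᵀ − Rᵀ·E₀, and assume that N is invertible and that the 2n×2n block matrix (Sᵀ Qᵀ; Rᵀ Pᵀ) is invertible. Set C = M·N⁻¹. Then the subspace of ℝⁿ × ℝⁿ given by { (vecMul η (Sᵀ + C·Rᵀ), vecMul η (Qᵀ + C·Pᵀ)) : η ∈ ℝⁿ } equals the subspace { (ξ, vecMul ξ E₀) : ξ ∈ ℝⁿ }, where vecMul denotes multiplication of a row vector by a matrix. (This expresses the invariance of the subspace ℰ⁺ = span{X_j + (E₀)_{jk} X̃^k} = span{U_j + (E₀ᵤ)_{jk} Ũ^k} under the Poisson–Lie T-plurality transformation with E₀ᵤ = M·N⁻¹.) -/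

import Mathlib

open Matrix

/-- Invariance of the subspace `ℰ⁺` under the Poisson–Lie T-plurality transformation:
with `M = Sᵀ·E₀ − Qᵀ`, `N = Pᵀ − Rᵀ·E₀` invertible, `C = M·N⁻¹`, and the block matrix
`(Sᵀ Qᵀ; Rᵀ Pᵀ)` invertible, the subspace
`{ (η·(Sᵀ + C·Rᵀ), η·(Qᵀ + C·Pᵀ)) : η ∈ ℝⁿ }` equals `{ (ξ, ξ·E₀) : ξ ∈ ℝⁿ }`. -/
theorem Eplus_invariance (n : ℕ) (hn : 0 < n)
    (P Q R S E₀ : Matrix (Fin n) (Fin n) ℝ)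
    (hN : IsUnit (Pᵀ - Rᵀ * E₀))
    (hT : IsUnit (Matrix.fromBlocks Sᵀ Qᵀ Rᵀ Pᵀ)) :
    {x : (Fin n → ℝ) × (Fin n → ℝ) |
        ∃ η : Fin n → ℝ,
          x = (Matrix.vecMul η (Sᵀ + (Sᵀ * E₀ - Qᵀ) * (Pᵀ - Rᵀ * E₀)⁻¹ * Rᵀ),
               Matrix.vecMul η (Qᵀ + (Sᵀ * E₀ - Qᵀ) * (Pᵀ - Rᵀ * E₀)⁻¹ * Pᵀ))} =
      {x : (Fin n → ℝ) × (Fin n → ℝ) |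
        ∃ ξ : Fin n → ℝ, x = (ξ, Matrix.vecMul ξ E₀)} := by
  set Nm : Matrix (Fin n) (Fin n) ℝ := Pᵀ - Rᵀ * E₀ with hNm
  set Mm : Matrix (Fin n) (Fin n) ℝ := Sᵀ * E₀ - Qᵀ with hMm
  set A : Matrix (Fin n) (Fin n) ℝ := Sᵀ + Mm * Nm⁻¹ * Rᵀ with hA
  have hNinvmul : Nm⁻¹ * Nm = 1 := Matrix.nonsing_inv_mul Nm
    ((Matrix.isUnit_iff_isUnit_det Nm).mp hN)
  -- Key identity: the second matrix is `A * E₀`.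
  have hkey : Qᵀ + Mm * Nm⁻¹ * Pᵀ = A * E₀ := by
    have hP : Pᵀ = Nm + Rᵀ * E₀ := by rw [hNm]; noncomm_ring
    have hQ : Qᵀ = Sᵀ * E₀ - Mm := by rw [hMm]; noncomm_ring
    rw [hP, hQ, hA, Matrix.mul_add, Matrix.mul_assoc Mm Nm⁻¹ Nm, hNinvmul, Matrix.mul_one]
    noncomm_ring
  -- `A` is invertible, via the Schur complement of the block matrix.
  have hAunit : IsUnit A := by
    have hNneg : IsUnit (-Nm) := by
      rw [Matrix.isUnit_iff_isUnit_det] at hN ⊢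
      rw [Matrix.det_neg]
      simpa using (isUnit_one.neg.pow (Fintype.card (Fin n))).mul hN
    cases hNneg.nonempty_invertible with
    | intro iN =>
      have hfac : Matrix.fromBlocks Sᵀ Qᵀ Rᵀ Pᵀ *
          Matrix.fromBlocks E₀ (1 : Matrix (Fin n) (Fin n) ℝ) (-1 : Matrix (Fin n) (Fin n) ℝ) (0 : Matrix (Fin n) (Fin n) ℝ) *
          Matrix.fromBlocks (0 : Matrix (Fin n) (Fin n) ℝ) (1 : Matrix (Fin n) (Fin n) ℝ) (1 : Matrix (Fin n) (Fin n) ℝ) (0 : Matrix (Fin n) (Fin n) ℝ) =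
          Matrix.fromBlocks Sᵀ Mm Rᵀ (-Nm) := by
        simp [Matrix.fromBlocks_multiply, hMm, hNm, Matrix.mul_neg, sub_eq_add_neg,
          neg_sub, add_comm]
      have h2 : IsUnit (Matrix.fromBlocks E₀ (1 : Matrix (Fin n) (Fin n) ℝ) (-1 : Matrix (Fin n) (Fin n) ℝ) (0 : Matrix (Fin n) (Fin n) ℝ)) := by
        rw [Matrix.isUnit_iff_isUnit_det]
        have hmul : Matrix.fromBlocks E₀ (1 : Matrix (Fin n) (Fin n) ℝ)
            (-1 : Matrix (Fin n) (Fin n) ℝ) (0 : Matrix (Fin n) (Fin n) ℝ) *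
            Matrix.fromBlocks (0 : Matrix (Fin n) (Fin n) ℝ)
            (-1 : Matrix (Fin n) (Fin n) ℝ) (1 : Matrix (Fin n) (Fin n) ℝ) E₀ = 1 := by
          simp [Matrix.fromBlocks_multiply, ← Matrix.fromBlocks_one]
        exact IsUnit.of_mul_eq_one _ (by rw [← Matrix.det_mul, hmul, Matrix.det_one])
      have h3 : IsUnit (Matrix.fromBlocks (0 : Matrix (Fin n) (Fin n) ℝ) (1 : Matrix (Fin n) (Fin n) ℝ) (1 : Matrix (Fin n) (Fin n) ℝ) (0 : Matrix (Fin n) (Fin n) ℝ)) := by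
        rw [Matrix.isUnit_iff_isUnit_det]
        have hmul : Matrix.fromBlocks (0 : Matrix (Fin n) (Fin n) ℝ)
            (1 : Matrix (Fin n) (Fin n) ℝ) (1 : Matrix (Fin n) (Fin n) ℝ)
            (0 : Matrix (Fin n) (Fin n) ℝ) *
            Matrix.fromBlocks (0 : Matrix (Fin n) (Fin n) ℝ)
            (1 : Matrix (Fin n) (Fin n) ℝ) (1 : Matrix (Fin n) (Fin n) ℝ)
            (0 : Matrix (Fin n) (Fin n) ℝ) = 1 := by
          simp [Matrix.fromBlocks_multiply, ← Matrix.fromBlocks_one]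
        exact IsUnit.of_mul_eq_one _ (by rw [← Matrix.det_mul, hmul, Matrix.det_one])
      have hblk : IsUnit (Matrix.fromBlocks Sᵀ Mm Rᵀ (-Nm)) := by
        rw [← hfac]; exact (hT.mul h2).mul h3
      have := (Matrix.isUnit_fromBlocks_iff_of_invertible₂₂
        (A := Sᵀ) (B := Mm) (C := Rᵀ) (D := -Nm)).mp hblk
      have hinv : ⅟(-Nm) = -Nm⁻¹ := invOf_eq_right_inv (by
        rw [Matrix.mul_neg, Matrix.neg_mul, neg_neg,
          Matrix.mul_nonsing_inv _ ((Matrix.isUnit_iff_isUnit_det Nm).mp hN)])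
      rw [hinv] at this
      simpa [hA, Matrix.mul_neg, Matrix.neg_mul, sub_neg_eq_add] using this
  -- Now prove the set equality.
  ext x
  simp only [Set.mem_setOf_eq]
  constructor
  · rintro ⟨η, rfl⟩
    exact ⟨Matrix.vecMul η A, by rw [Matrix.vecMul_vecMul, ← hkey]⟩
  · rintro ⟨ξ, rfl⟩
    refine ⟨Matrix.vecMul ξ A⁻¹, ?_⟩
    have hAA : A⁻¹ * A = 1 := Matrix.nonsing_inv_mul A
      ((Matrix.isUnit_iff_isUnit_det A).mp hAunit)
    symm
    refine Prod.ext ?_ ?_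
    · show Matrix.vecMul (Matrix.vecMul ξ A⁻¹) A = ξ
      rw [Matrix.vecMul_vecMul, hAA, Matrix.vecMul_one]
    · show Matrix.vecMul (Matrix.vecMul ξ A⁻¹) (Qᵀ + Mm * Nm⁻¹ * Pᵀ) = Matrix.vecMul ξ E₀
      rw [Matrix.vecMul_vecMul, hkey, ← Matrix.mul_assoc, hAA, Matrix.one_mul]
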